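/- arXiv:1807.06327 — 3 statements merged into one kernel-verified Lean document; each statement's English description precedes it below -/
import Mathlib

section
/- Let a, b ∈ ℝ_{>0}^d be such that T(b) = A(T(a)) for some affine unimodular transformation A ∈ Aff(ℤ^d), where T(c) = conv{0, c_1 e_1, …, c_d e_d}. Then b is a permutation of a, i.e., a and b coincide up to permutation of their components. -/
open scoped BigOperators

noncomputable section

/-- A point of `ℝ^d` is integral if all its coordinates are integers. -/
def IsIntegralPoint {d : ℕ} (x : Fin d → ℝ) : Prop := ∀ i, ∃ n : ℤ, x i = (n : ℝ)

/-- The set `ℤ^d` of integral points of `ℝ^d`. -/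
def latticePts (d : ℕ) : Set (Fin d → ℝ) := {x | IsIntegralPoint x}

/-- A set `K ⊆ ℝ^d` is lattice-free if it is closed, convex, `d`-dimensional (nonempty
interior) and its interior contains no integral point. -/
def IsLatticeFree {d : ℕ} (K : Set (Fin d → ℝ)) : Prop :=
  IsClosed K ∧ Convex ℝ K ∧ (interior K).Nonempty ∧ interior K ∩ latticePts d = ∅

/-- A set is maximal lattice-free if it is lattice-free and not properly contained in
another lattice-free set. -/
def IsMaxLatticeFree {d : ℕ} (K : Set (Fin d → ℝ)) : Prop :=
  IsLatticeFree K ∧ ∀ K' : Set (Fin d → ℝ), IsLatticeFree K' → K ⊆ K' → K = K'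

/-- A polytope is the convex hull of a finite set of points. -/
def IsPolytope {d : ℕ} (P : Set (Fin d → ℝ)) : Prop :=
  ∃ V : Finset (Fin d → ℝ), P = convexHull ℝ (V : Set (Fin d → ℝ))

/-- A polyhedron is a finite intersection of closed halfspaces. -/
def IsPolyhedron {d : ℕ} (P : Set (Fin d → ℝ)) : Prop :=
  ∃ (n : ℕ) (c : Fin n → (Fin d → ℝ)) (b : Fin n → ℝ),
    P = {x | ∀ j, ∑ i, c j i * x i ≤ b j}

/-- The integer hull of a set: the convex hull of its integral points. -/
def intHull {d : ℕ} (K : Set (Fin d → ℝ)) : Set (Fin d → ℝ) :=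
  convexHull ℝ (K ∩ latticePts d)

/-- A polytope is integral if it is the convex hull of its integral points. -/
def IsIntegralPolytope {d : ℕ} (P : Set (Fin d → ℝ)) : Prop :=
  IsPolytope P ∧ P = intHull P

/-- A facet of a `d`-dimensional closed convex set in `ℝ^d` : a nonempty exposed face of
dimension `d - 1`. -/
def IsFacet {d : ℕ} (P F : Set (Fin d → ℝ)) : Prop :=
  IsExposed ℝ P F ∧ F.Nonempty ∧ Module.finrank ℝ (vectorSpan ℝ F) + 1 = d

/-- A facet is blocked if its relative interior contains an integral point. -/
def IsBlocked {d : ℕ} (F : Set (Fin d → ℝ)) : Prop :=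
  ∃ x ∈ intrinsicInterior ℝ F, IsIntegralPoint x

/-- A facet `F` of a `d`-dimensional lattice-free polyhedron in `ℝ^d` is strongly blocked
if its integer hull is `(d-1)`-dimensional and the relative interior of the integer hull
contains an integral point. -/
def IsStronglyBlockedFacet {d : ℕ} (P F : Set (Fin d → ℝ)) : Prop :=
  IsFacet P F ∧ Module.finrank ℝ (vectorSpan ℝ (intHull F)) + 1 = d ∧
    ∃ x ∈ intrinsicInterior ℝ (intHull F), IsIntegralPoint x

/-- A polyhedron is strongly blocked if all its facets are strongly blocked. -/
def IsStronglyBlocked {d : ℕ} (P : Set (Fin d → ℝ)) : Prop :=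
  ∀ F, IsFacet P F → IsStronglyBlockedFacet P F

/-- Membership in the family `L^d` of weakly maximal integral lattice-free polytopes:
integral lattice-free polytopes not properly contained in another integral
lattice-free polytope. -/
def MemL {d : ℕ} (P : Set (Fin d → ℝ)) : Prop :=
  IsIntegralPolytope P ∧ IsLatticeFree P ∧
    ∀ Q : Set (Fin d → ℝ), IsIntegralPolytope Q → IsLatticeFree Q → P ⊆ Q → P = Q

/-- Membership in the family `M^d` of strongly maximal integral lattice-free polytopes:
integral lattice-free polytopes not properly contained in another lattice-free set. -/
def MemM {d : ℕ} (P : Set (Fin d → ℝ)) : Prop :=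
  IsIntegralPolytope P ∧ IsLatticeFree P ∧
    ∀ K : Set (Fin d → ℝ), IsLatticeFree K → P ⊆ K → P = K

/-- An affine transformation of `ℝ^d` is unimodular if it maps `ℤ^d` onto `ℤ^d`. -/
def IsUnimodular {d : ℕ} (A : (Fin d → ℝ) ≃ᵃ[ℝ] (Fin d → ℝ)) : Prop :=
  A '' latticePts d = latticePts d

/-- The relation on subsets of `ℝ^d` of coinciding up to an affine unimodular
transformation. -/
def UnimodEquiv {d : ℕ} (P Q : Set (Fin d → ℝ)) : Prop :=
  ∃ A : (Fin d → ℝ) ≃ᵃ[ℝ] (Fin d → ℝ), IsUnimodular A ∧ Q = A '' P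

/-- `κ(a) = 1/a₁ + ⋯ + 1/a_d`. -/
def kappa {d : ℕ} (a : Fin d → ℝ) : ℝ := ∑ i, (a i)⁻¹

/-- The axis-aligned simplex `T(a) = conv {0, a₁ e₁, …, a_d e_d}`. -/
def axisSimplex {d : ℕ} (a : Fin d → ℝ) : Set (Fin d → ℝ) :=
  convexHull ℝ (insert 0 (Set.range fun i => a i • (Pi.single i 1 : Fin d → ℝ)))

/-- The map `φ` replacing the last component `t` by `t+1, t(t+1)`. -/
def phiMap {d : ℕ} (a : Fin (d + 1) → ℝ) : Fin (d + 2) → ℝ :=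
  Fin.snoc (Fin.snoc (Fin.init a) (a (Fin.last d) + 1))
    (a (Fin.last d) * (a (Fin.last d) + 1))

/-- The map `ψ` replacing the last component `t` by
`t+3, t(t+1), (t+1)(t+3), (t+1)(t+3)`. -/
def psiMap {d : ℕ} (a : Fin (d + 1) → ℝ) : Fin (d + 4) → ℝ :=
  Fin.snoc (Fin.snoc (Fin.snoc (Fin.snoc (Fin.init a) (a (Fin.last d) + 3))
    (a (Fin.last d) * (a (Fin.last d) + 1)))
    ((a (Fin.last d) + 1) * (a (Fin.last d) + 3)))
    ((a (Fin.last d) + 1) * (a (Fin.last d) + 3))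

/-- The map `ξ` replacing the last component `t` by `(3/2)t, 3t`. -/
def xiMap {d : ℕ} (a : Fin (d + 1) → ℝ) : Fin (d + 2) → ℝ :=
  Fin.snoc (Fin.snoc (Fin.init a) (3 / 2 * a (Fin.last d))) (3 * a (Fin.last d))

/-- The composition `η = ξ ∘ ψ ∘ φ`. -/
def etaMap {d : ℕ} (a : Fin (d + 1) → ℝ) : Fin (d + 6) → ℝ :=
  xiMap (psiMap (phiMap a))

/-- The set `A_d` of representations of `1` as a sum of `d` Egyptian fractions,
with components sorted in ascending order. -/
def EgyptSet (d : ℕ) : Set (Fin d → ℕ) :=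
  {a | (∀ i, 0 < a i) ∧ Monotone a ∧ ∑ i, ((a i : ℝ))⁻¹ = 1}

end

private lemma ratio_eq_aux {x y : ℝ} (hx : 0 < x) (hy : 0 < y)
    (h1 : ∃ m : ℤ, y = m * x) (h2 : ∃ n : ℤ, x = n * y) : x = y := by
  obtain ⟨m, hm⟩ := h1
  obtain ⟨n, hn⟩ := h2
  have hmn : ((m : ℝ)) * (n : ℝ) = 1 := by
    have h : y = ((m : ℝ) * (n : ℝ)) * y := by rw [mul_assoc, ← hn, hm]
    have hy' : y ≠ 0 := hy.ne'
    nlinarith [h]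
  have hmn' : m * n = 1 := by exact_mod_cast hmn
  rcases Int.mul_eq_one_iff_eq_one_or_neg_one.mp hmn' with ⟨hm1, -⟩ | ⟨hm1, -⟩
  · rw [hm1] at hm; simpa using hm.symm
  · rw [hm1] at hm; push_cast at hm; nlinarith

private lemma vertex_extreme {E : Type*} [AddCommGroup E] [Module ℝ E] {ι : Type*} [Fintype ι]
    {p : ι → E} (hp : AffineIndependent ℝ p) (j : ι) :
    p j ∈ (convexHull ℝ (Set.range p)).extremePoints ℝ := by
  classical
  refine mem_extremePoints.2 ⟨subset_convexHull ℝ _ ⟨j, rfl⟩, ?_⟩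
  intro x₁ h₁ x₂ h₂ hseg
  rw [convexHull_range_eq_exists_affineCombination] at h₁ h₂
  obtain ⟨s₁, w₁, hw₁0, hw₁s, hx₁⟩ := h₁
  obtain ⟨s₂, w₂, hw₂0, hw₂s, hx₂⟩ := h₂
  set W₁ : ι → ℝ := Set.indicator (s₁ : Set ι) w₁ with hW₁def
  set W₂ : ι → ℝ := Set.indicator (s₂ : Set ι) w₂ with hW₂def
  have hW₁nn : ∀ i, 0 ≤ W₁ i := fun i => by
    by_cases h : i ∈ (s₁ : Set ι)
    · rw [hW₁def, Set.indicator_of_mem h]; exact hw₁0 i h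
    · rw [hW₁def, Set.indicator_of_notMem h]
  have hW₂nn : ∀ i, 0 ≤ W₂ i := fun i => by
    by_cases h : i ∈ (s₂ : Set ι)
    · rw [hW₂def, Set.indicator_of_mem h]; exact hw₂0 i h
    · rw [hW₂def, Set.indicator_of_notMem h]
  have hW₁s : ∑ i, W₁ i = 1 := by
    rw [hW₁def, Finset.sum_indicator_subset w₁ (Finset.subset_univ s₁)]
    exact hw₁s
  have hW₂s : ∑ i, W₂ i = 1 := by
    rw [hW₂def, Finset.sum_indicator_subset w₂ (Finset.subset_univ s₂)]
    exact hw₂s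
  have hx₁' : x₁ = ∑ i, W₁ i • p i := by
    rw [← hx₁, Finset.affineCombination_indicator_subset w₁ p (Finset.subset_univ s₁),
      Finset.affineCombination_eq_linear_combination _ _ _ hW₁s]
  have hx₂' : x₂ = ∑ i, W₂ i • p i := by
    rw [← hx₂, Finset.affineCombination_indicator_subset w₂ p (Finset.subset_univ s₂),
      Finset.affineCombination_eq_linear_combination _ _ _ hW₂s]
  obtain ⟨c₁, c₂, hc₁, hc₂, hcs, hcx⟩ := hseg
  set W : ι → ℝ := fun i => c₁ * W₁ i + c₂ * W₂ i with hWdef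
  set δ : ι → ℝ := fun i => if i = j then 1 else 0 with hδdef
  have hWs : ∑ i, W i = 1 := by
    simp only [hWdef, Finset.sum_add_distrib, ← Finset.mul_sum, hW₁s, hW₂s, mul_one]
    exact hcs
  have hδs : ∑ i, δ i = 1 := by simp [hδdef]
  have hWδ : W = δ := by
    refine (affineIndependent_iff_eq_of_fintype_affineCombination_eq ℝ p).1 hp W δ hWs hδs ?_
    rw [Finset.affineCombination_eq_linear_combination _ _ _ hWs,
      Finset.affineCombination_eq_linear_combination _ _ _ hδs]
    have hL : ∑ i, W i • p i = p j := by
      rw [← hcx, hx₁', hx₂', Finset.smul_sum, Finset.smul_sum, ← Finset.sum_add_distrib]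
      exact Finset.sum_congr rfl fun i _ => by simp [hWdef, add_smul, mul_smul]
    have hR : ∑ i, δ i • p i = p j := by
      rw [hδdef, Finset.sum_eq_single j (fun i _ hij => by simp [hij]) (by simp)]
      simp
    rw [hL, hR]
  have hW0 : ∀ i, i ≠ j → W₁ i = 0 ∧ W₂ i = 0 := by
    intro i hij
    have h := congrFun hWδ i
    simp only [hWdef, hδdef, if_neg hij] at h
    have h1 := mul_nonneg hc₁.le (hW₁nn i)
    have h2 := mul_nonneg hc₂.le (hW₂nn i)
    have e1 : c₁ * W₁ i = 0 := by linarith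
    have e2 : c₂ * W₂ i = 0 := by linarith
    exact ⟨(mul_eq_zero.mp e1).resolve_left hc₁.ne',
      (mul_eq_zero.mp e2).resolve_left hc₂.ne'⟩
  have hW₁j : W₁ j = 1 := by
    rw [← hW₁s, Finset.sum_eq_single j (fun i _ hij => (hW0 i hij).1) (by simp)]
  have hW₂j : W₂ j = 1 := by
    rw [← hW₂s, Finset.sum_eq_single j (fun i _ hij => (hW0 i hij).2) (by simp)]
  constructor
  · rw [hx₁', Finset.sum_eq_single j (fun i _ hij => by rw [(hW0 i hij).1, zero_smul]) (by simp),
      hW₁j, one_smul]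
  · rw [hx₂', Finset.sum_eq_single j (fun i _ hij => by rw [(hW0 i hij).2, zero_smul]) (by simp),
      hW₂j, one_smul]

private lemma range_eq_of_convexHull_eq {E : Type*} [AddCommGroup E] [Module ℝ E] {ι : Type*}
    [Fintype ι] {p q : ι → E} (hp : AffineIndependent ℝ p) (hq : AffineIndependent ℝ q)
    (h : convexHull ℝ (Set.range p) = convexHull ℝ (Set.range q)) :
    Set.range p = Set.range q := by
  apply Set.Subset.antisymm
  · rintro x ⟨j, rfl⟩
    have hx := vertex_extreme hp j
    rw [h] at hx
    exact extremePoints_convexHull_subset hx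
  · rintro x ⟨j, rfl⟩
    have hx := vertex_extreme hq j
    rw [← h] at hx
    exact extremePoints_convexHull_subset hx

private lemma affineIndep_cons {d : ℕ} {a : Fin d → ℝ} (ha : ∀ i, 0 < a i) :
    AffineIndependent ℝ
      (Fin.cons 0 (fun i => a i • (Pi.single i 1 : Fin d → ℝ)) : Fin (d + 1) → Fin d → ℝ) := by
  rw [affineIndependent_iff_linearIndependent_vsub ℝ _ 0]
  have hb : LinearIndependent ℝ (fun i : Fin d => a i • (Pi.single i 1 : Fin d → ℝ)) := by
    have hB := ((Pi.basisFun ℝ (Fin d)).unitsSMul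
      (fun i => Units.mk0 (a i) (ha i).ne')).linearIndependent
    convert hB using 1
    funext i
    rw [Module.Basis.unitsSMul_apply]
    simp [Pi.basisFun_apply]
  have hcomp := hb.comp (fun x : {x : Fin (d + 1) // x ≠ 0} => (x : Fin (d + 1)).pred x.prop)
    (fun x y hxy => by
      have h2 := congrArg Fin.succ hxy
      rw [Fin.succ_pred, Fin.succ_pred] at h2
      exact Subtype.ext h2)
  convert hcomp using 1
  funext x
  have hx : (x : Fin (d + 1)) = ((x : Fin (d + 1)).pred x.prop).succ := (Fin.succ_pred _ _).symm
  show (Fin.cons 0 _ : Fin (d + 1) → Fin d → ℝ) (x : Fin (d + 1)) -ᵥ _ = _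
  rw [hx, Fin.cons_succ, Fin.cons_zero]
  simp [Function.comp]
  all_goals rfl

/-- if `T(b) = A (T(a))` for a unimodular affine transformation `A`, then
`a` and `b` coincide up to permutation of components. -/
theorem statement12 {d : ℕ} (a b : Fin d → ℝ) (ha : ∀ i, 0 < a i) (hb : ∀ i, 0 < b i)
    (A : (Fin d → ℝ) ≃ᵃ[ℝ] (Fin d → ℝ)) (hA : IsUnimodular A)
    (h : axisSimplex b = A '' axisSimplex a) :
    ∃ σ : Equiv.Perm (Fin d), ∀ i, b i = a (σ i) := by
  classical
  set p : Fin (d + 1) → (Fin d → ℝ) :=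
    Fin.cons 0 (fun i => a i • (Pi.single i 1 : Fin d → ℝ)) with hpdef
  set q : Fin (d + 1) → (Fin d → ℝ) :=
    Fin.cons 0 (fun i => b i • (Pi.single i 1 : Fin d → ℝ)) with hqdef
  have hp0 : p 0 = 0 := Fin.cons_zero _ _
  have hq0 : q 0 = 0 := Fin.cons_zero _ _
  have hps : ∀ i : Fin d, p i.succ = a i • (Pi.single i 1 : Fin d → ℝ) :=
    fun i => Fin.cons_succ _ _ i
  have hqs : ∀ i : Fin d, q i.succ = b i • (Pi.single i 1 : Fin d → ℝ) :=
    fun i => Fin.cons_succ _ _ i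
  have hpAff : AffineIndependent ℝ p := affineIndep_cons ha
  have hqAff : AffineIndependent ℝ q := affineIndep_cons hb
  have hApAff : AffineIndependent ℝ (⇑A.toAffineMap ∘ p) :=
    hpAff.map' A.toAffineMap A.injective
  have hcvp : convexHull ℝ (Set.range p) = axisSimplex a := by
    rw [hpdef, Fin.range_cons, axisSimplex]
  have hcvq : convexHull ℝ (Set.range q) = axisSimplex b := by
    rw [hqdef, Fin.range_cons, axisSimplex]
  have hrange : Set.range (⇑A.toAffineMap ∘ p) = Set.range q := by
    refine range_eq_of_convexHull_eq hApAff hqAff ?_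
    rw [hcvq, Set.range_comp, ← AffineMap.image_convexHull, hcvp, h]
    rfl
  have hmem : ∀ i, A (p i) ∈ Set.range q := fun i => by
    rw [← hrange]; exact ⟨i, rfl⟩
  choose f hf using hmem
  have hfinj : Function.Injective f := by
    intro i i' hii
    apply hpAff.injective; apply A.injective
    rw [← hf, ← hf, hii]
  have hfbij : Function.Bijective f := Finite.injective_iff_bijective.mp hfinj
  set σ' : Equiv.Perm (Fin (d + 1)) := Equiv.ofBijective f hfbij with hσdef
  have hfsymm : ∀ j, f (σ'.symm j) = j := fun j => σ'.apply_symm_apply j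
  have hAint : ∀ x : Fin d → ℝ, IsIntegralPoint x → IsIntegralPoint (A x) := by
    intro x hx
    have hx' : A x ∈ A '' latticePts d := ⟨x, hx, rfl⟩
    rw [hA] at hx'; exact hx'
  have hAsint : ∀ x : Fin d → ℝ, IsIntegralPoint x → IsIntegralPoint (A.symm x) := by
    intro x hx
    have hx' : x ∈ A '' latticePts d := by rw [hA]; exact hx
    obtain ⟨y, hy, rfl⟩ := hx'
    rwa [A.symm_apply_apply]
  have h0int : IsIntegralPoint (0 : Fin d → ℝ) := fun k => ⟨0, by simp⟩
  have heint : ∀ i : Fin d, IsIntegralPoint (Pi.single i 1 : Fin d → ℝ) := by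
    intro i k
    by_cases hk : k = i
    · exact ⟨1, by subst hk; simp⟩
    · exact ⟨0, by simp [Pi.single_eq_of_ne hk]⟩
  have hLin : ∀ x, A x = A.linear x + A 0 := by
    intro x
    have h' := A.toAffineMap.map_vadd (0 : Fin d → ℝ) x
    simpa using h'
  have hLin' : ∀ x, A.symm x = A.symm.linear x + A.symm 0 := by
    intro x
    have h' := A.symm.toAffineMap.map_vadd (0 : Fin d → ℝ) x
    simpa using h'
  have hLint : ∀ x, IsIntegralPoint x → IsIntegralPoint (A.linear x) := by
    intro x hx k
    obtain ⟨n1, hn1⟩ := hAint x hx k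
    obtain ⟨n2, hn2⟩ := hAint 0 h0int k
    refine ⟨n1 - n2, ?_⟩
    have h' := congrFun (hLin x) k
    simp only [Pi.add_apply] at h'
    rw [hn1, hn2] at h'
    push_cast
    linarith
  have hLsint : ∀ x, IsIntegralPoint x → IsIntegralPoint (A.symm.linear x) := by
    intro x hx k
    obtain ⟨n1, hn1⟩ := hAsint x hx k
    obtain ⟨n2, hn2⟩ := hAsint 0 h0int k
    refine ⟨n1 - n2, ?_⟩
    have h' := congrFun (hLin' x) k
    simp only [Pi.add_apply] at h'
    rw [hn1, hn2] at h'
    push_cast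
    linarith
  have key1 : ∀ i : Fin (d + 1), A.linear (p i) = q (f i) - q (f 0) := by
    intro i
    have h1 := hLin (p i)
    have h2 : A 0 = q (f 0) := by rw [← hp0, ← hf]
    rw [← hf i, h2] at h1
    rw [h1]; abel
  have key2 : ∀ j : Fin (d + 1), A.symm.linear (q j) = p (σ'.symm j) - p (σ'.symm 0) := by
    intro j
    have hsymmq : ∀ j, A.symm (q j) = p (σ'.symm j) := by
      intro j
      conv_lhs => rw [← hfsymm j]
      rw [hf, A.symm_apply_apply]
    have h1 := hLin' (q j)
    have h2 : A.symm 0 = p (σ'.symm 0) := by rw [← hq0, hsymmq]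
    rw [hsymmq, h2] at h1
    rw [h1]; abel
  have hratio : ∀ i k : Fin d, ∃ m : ℤ, (A.linear (p i.succ)) k = m * a i := by
    intro i k
    obtain ⟨m, hm⟩ := hLint (Pi.single i 1) (heint i) k
    refine ⟨m, ?_⟩
    rw [hps i, map_smul, Pi.smul_apply, hm, smul_eq_mul]
    ring
  have hratio2 : ∀ i k : Fin d, ∃ n : ℤ, (A.symm.linear (q i.succ)) k = n * b i := by
    intro i k
    obtain ⟨n, hn⟩ := hLsint (Pi.single i 1) (heint i) k
    refine ⟨n, ?_⟩
    rw [hqs i, map_smul, Pi.smul_apply, hn, smul_eq_mul]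
    ring
  have main : ∃ g : Fin d → Fin d, Function.Injective g ∧ ∀ i, b (g i) = a i := by
    by_cases h0 : f 0 = 0
    · -- A fixes the origin
      have hfs0 : ∀ i : Fin d, f i.succ ≠ 0 := fun i hi =>
        Fin.succ_ne_zero i (hfinj (hi.trans h0.symm))
      refine ⟨fun i => (f i.succ).pred (hfs0 i), ?_, ?_⟩
      · intro i i' hii
        have hii' : (f i.succ).pred (hfs0 i) = (f i'.succ).pred (hfs0 i') := hii
        have h1 : f i.succ = f i'.succ := by
          rw [← Fin.succ_pred (f i.succ) (hfs0 i), hii', Fin.succ_pred]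
        exact Fin.succ_injective _ (hfinj h1)
      · intro i
        show b ((f i.succ).pred (hfs0 i)) = a i
        set k : Fin d := (f i.succ).pred (hfs0 i) with hkdef
        have hfsg : f i.succ = k.succ := (Fin.succ_pred _ _).symm
        have hk1 : A.linear (p i.succ) = b k • (Pi.single k 1 : Fin d → ℝ) := by
          rw [key1, hfsg, hqs, h0, hq0, sub_zero]
        obtain ⟨m, hm⟩ := hratio i k
        rw [hk1] at hm
        have hm' : b k = m * a i := by simpa using hm
        have hsymm0 : σ'.symm 0 = 0 := by
          rw [Equiv.symm_apply_eq]
          exact h0.symm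
        have hsk : σ'.symm k.succ = i.succ := by
          rw [← hfsg]
          exact σ'.symm_apply_apply i.succ
        have hk2 : A.symm.linear (q k.succ) = a i • (Pi.single i 1 : Fin d → ℝ) := by
          rw [key2, hsymm0, hp0, sub_zero, hsk, hps]
        obtain ⟨n, hn⟩ := hratio2 k i
        rw [hk2] at hn
        have hn' : a i = n * b k := by simpa using hn
        exact (ratio_eq_aux (ha i) (hb k) ⟨m, hm'⟩ ⟨n, hn'⟩).symm
    · -- A moves the origin
      set j : Fin d := (f 0).pred h0 with hjdef
      have hj : f 0 = j.succ := (Fin.succ_pred _ _).symm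
      have hfi0s : f (σ'.symm 0) = 0 := hfsymm 0
      have hi0s0 : σ'.symm 0 ≠ 0 := fun hi => h0 (by conv_lhs => rw [← hi]; rw [hfi0s])
      set i0 : Fin d := (σ'.symm 0).pred hi0s0 with hi0def
      have hi0succ : i0.succ = σ'.symm 0 := Fin.succ_pred _ _
      have hfi0 : f i0.succ = 0 := by rw [hi0succ, hfi0s]
      have hfsne : ∀ i : Fin d, i ≠ i0 → f i.succ ≠ 0 := by
        intro i hi hcontra
        apply hi
        have h1 : i.succ = i0.succ := hfinj (by rw [hcontra, hfi0])
        exact Fin.succ_injective _ h1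
      set g : Fin d → Fin d :=
        fun i => if hcase : f i.succ = 0 then j else (f i.succ).pred hcase with hgdef
      have hgi0 : g i0 = j := by
        show (if hcase : f i0.succ = 0 then j else (f i0.succ).pred hcase) = j
        rw [dif_pos hfi0]
      have hgne : ∀ i : Fin d, i ≠ i0 → f i.succ = (g i).succ ∧ g i ≠ j := by
        intro i hi
        have hne := hfsne i hi
        have hg : g i = (f i.succ).pred hne := by
          show (if hcase : f i.succ = 0 then j else (f i.succ).pred hcase) = _
          rw [dif_neg hne]
        constructor
        · rw [hg, Fin.succ_pred]
        · intro hcontra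
          have h1 : f i.succ = j.succ := by
            rw [← Fin.succ_pred (f i.succ) hne, ← hg, hcontra]
          have h2 : i.succ = (0 : Fin (d + 1)) := hfinj (by rw [h1, ← hj])
          exact Fin.succ_ne_zero i h2
      have hginj : Function.Injective g := by
        intro i i' hii
        by_cases hi : i = i0 <;> by_cases hi' : i' = i0
        · rw [hi, hi']
        · exfalso
          apply (hgne i' hi').2
          rw [← hii, hi, hgi0]
        · exfalso
          apply (hgne i hi).2
          rw [hii, hi', hgi0]
        · have h1 : f i.succ = f i'.succ := by
            rw [(hgne i hi).1, (hgne i' hi').1, hii]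
          exact Fin.succ_injective _ (hfinj h1)
      refine ⟨g, hginj, fun i => ?_⟩
      by_cases hi : i = i0
      · rw [hi, hgi0]
        have hk1 : A.linear (p i0.succ) = -(b j • (Pi.single j 1 : Fin d → ℝ)) := by
          rw [key1, hfi0, hq0, hj, hqs, zero_sub]
        obtain ⟨m, hm⟩ := hratio i0 j
        rw [hk1] at hm
        have hm2 : -(b j) = m * a i0 := by simpa using hm
        have hm' : b j = (-m : ℤ) * a i0 := by push_cast; linarith
        have hsj : σ'.symm j.succ = 0 := by
          rw [← hj]
          exact σ'.symm_apply_apply 0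
        have hs0 : σ'.symm 0 = i0.succ := hi0succ.symm
        have hk2 : A.symm.linear (q j.succ) = -(a i0 • (Pi.single i0 1 : Fin d → ℝ)) := by
          rw [key2, hsj, hs0, hp0, hps, zero_sub]
        obtain ⟨n, hn⟩ := hratio2 j i0
        rw [hk2] at hn
        have hn2 : -(a i0) = n * b j := by simpa using hn
        have hn' : a i0 = (-n : ℤ) * b j := by push_cast; linarith
        have heq := ratio_eq_aux (ha i0) (hb j) ⟨-m, hm'⟩ ⟨-n, hn'⟩
        exact heq.symm
      · obtain ⟨hfs, hgj⟩ := hgne i hi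
        have hk1 : A.linear (p i.succ) =
            b (g i) • (Pi.single (g i) 1 : Fin d → ℝ) - b j • (Pi.single j 1 : Fin d → ℝ) := by
          rw [key1, hfs, hqs, hj, hqs]
        obtain ⟨m, hm⟩ := hratio i (g i)
        rw [hk1] at hm
        have hm' : b (g i) = m * a i := by
          simpa [Pi.single_eq_of_ne hgj] using hm
        have hsk : σ'.symm (g i).succ = i.succ := by
          rw [← hfs]
          exact σ'.symm_apply_apply i.succ
        have hs0 : σ'.symm 0 = i0.succ := hi0succ.symm
        have hk2 : A.symm.linear (q (g i).succ) =
            a i • (Pi.single i 1 : Fin d → ℝ) - a i0 • (Pi.single i0 1 : Fin d → ℝ) := by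
          rw [key2, hsk, hs0, hps, hps]
        obtain ⟨n, hn⟩ := hratio2 (g i) i
        rw [hk2] at hn
        have hn' : a i = n * b (g i) := by
          simpa [Pi.single_eq_of_ne hi] using hn
        exact (ratio_eq_aux (ha i) (hb (g i)) ⟨m, hm'⟩ ⟨n, hn'⟩).symm
  obtain ⟨g, hginj, hg⟩ := main
  have hgbij : Function.Bijective g := Finite.injective_iff_bijective.mp hginj
  refine ⟨(Equiv.ofBijective g hgbij).symm, fun i => ?_⟩
  have hgi : g ((Equiv.ofBijective g hgbij).symm i) = i :=
    (Equiv.ofBijective g hgbij).apply_symm_apply i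
  conv_lhs => rw [← hgi]
  rw [hg]
end

section
/- Every strongly blocked lattice-free polytope P in ℝ^d is a maximal lattice-free set. -/
open scoped BigOperators

namespace Statement13Aux

open Module Set

lemma exists_functional_vanishing {d : ℕ} {W : Submodule ℝ (Fin d → ℝ)} (hW : W ≠ ⊤) :
    ∃ g : (Fin d → ℝ) →L[ℝ] ℝ, g ≠ 0 ∧ ∀ x ∈ W, g x = 0 := by
  obtain ⟨f, hf0, hfmap⟩ :=
    Submodule.exists_dual_map_eq_bot_of_lt_top (lt_top_iff_ne_top.2 hW) inferInstance
  refine ⟨LinearMap.toContinuousLinearMap f, ?_, fun x hx => ?_⟩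
  · intro h
    refine hf0 (LinearMap.ext fun x => ?_)
    have := congrArg (fun (g : (Fin d → ℝ) →L[ℝ] ℝ) => g x) h
    simpa using this
  · have : f x ∈ W.map f := Submodule.mem_map_of_mem hx
    rw [hfmap] at this
    simpa using this

lemma vectorSpan_le_ker {d : ℕ} (f : (Fin d → ℝ) →L[ℝ] ℝ) (M : ℝ) (S : Set (Fin d → ℝ))
    (hS : ∀ v ∈ S, f v = M) : vectorSpan ℝ S ≤ LinearMap.ker (f : (Fin d → ℝ) →ₗ[ℝ] ℝ) := by
  rw [vectorSpan_def, Submodule.span_le]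
  rintro x ⟨u, hu, v, hv, rfl⟩
  simp [LinearMap.mem_ker, vsub_eq_sub, map_sub, hS u hu, hS v hv]

lemma finrank_ker_add_one {d : ℕ} (f : (Fin d → ℝ) →L[ℝ] ℝ) (hf : f ≠ 0) :
    finrank ℝ (LinearMap.ker (f : (Fin d → ℝ) →ₗ[ℝ] ℝ)) + 1 = d := by
  obtain ⟨x, hx⟩ : ∃ x, f x ≠ 0 := by
    by_contra h; push_neg at h; exact hf (by ext z; simp [h z])
  have hrange : LinearMap.range (f : (Fin d → ℝ) →ₗ[ℝ] ℝ) = ⊤ := by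
    rw [eq_top_iff]
    intro y _
    exact ⟨(y / f x) • x, by simp [map_smul]; field_simp⟩
  have h := LinearMap.finrank_range_add_finrank_ker (f : (Fin d → ℝ) →ₗ[ℝ] ℝ)
  rw [hrange, finrank_top] at h
  have h1 : finrank ℝ ℝ = 1 := Module.finrank_self ℝ
  have h2 : finrank ℝ (Fin d → ℝ) = d := Module.finrank_fin_fun ℝ
  have hker : LinearMap.ker (f : (Fin d → ℝ) →ₗ[ℝ] ℝ) = LinearMap.ker (f : (Fin d → ℝ) →ₗ[ℝ] ℝ) := rfl
  rw [hker] at h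
  omega

lemma tilt {d : ℕ} (V : Finset (Fin d → ℝ)) (y : Fin d → ℝ)
    (hVtop : vectorSpan ℝ (V : Set (Fin d → ℝ)) = ⊤) :
    ∀ (k : ℕ) (f : (Fin d → ℝ) →L[ℝ] ℝ) (M : ℝ),
      (∀ v ∈ V, f v ≤ M) → (∃ v ∈ V, f v = M) → M < f y →
      (V.filter fun v => f v ≠ M).card ≤ k →
      ∃ (f' : (Fin d → ℝ) →L[ℝ] ℝ) (M' : ℝ),
        (∀ v ∈ V, f' v ≤ M') ∧ (∃ v ∈ V, f' v = M') ∧ M' < f' y ∧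
        finrank ℝ (vectorSpan ℝ {v : Fin d → ℝ | v ∈ V ∧ f' v = M'}) + 1 = d := by
  intro k
  induction k with
  | zero =>
    intro f M hle hex hfy hcard
    exfalso
    obtain ⟨v₀, hv₀, hfv₀⟩ := hex
    have hall : ∀ v ∈ V, f v = M := by
      intro v hv
      by_contra hne
      have hmem : v ∈ V.filter fun v => f v ≠ M := Finset.mem_filter.2 ⟨hv, hne⟩
      have := Finset.card_pos.2 ⟨v, hmem⟩
      omega
    have h1 : vectorSpan ℝ (V : Set (Fin d → ℝ)) ≤ LinearMap.ker (f : (Fin d → ℝ) →ₗ[ℝ] ℝ) :=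
      vectorSpan_le_ker f M _ (fun v hv => hall v hv)
    rw [hVtop, top_le_iff] at h1
    have hfy0 : f y = 0 := by
      have : y ∈ LinearMap.ker (f : (Fin d → ℝ) →ₗ[ℝ] ℝ) := h1 ▸ Submodule.mem_top
      simpa using this
    have hfv0 : f v₀ = 0 := by
      have : v₀ ∈ LinearMap.ker (f : (Fin d → ℝ) →ₗ[ℝ] ℝ) := h1 ▸ Submodule.mem_top
      simpa using this
    rw [hfv0] at hfv₀
    rw [hfy0, ← hfv₀] at hfy
    exact lt_irrefl _ hfy
  | succ k ih =>
    intro f M hle hex hfy hcard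
    obtain ⟨s₀, hs₀V, hs₀⟩ := hex
    set S : Set (Fin d → ℝ) := {v | v ∈ V ∧ f v = M} with hSdef
    have hfne : f ≠ 0 := by
      intro h
      rw [h] at hfy hs₀
      simp at hfy hs₀
      rw [← hs₀] at hfy
      exact lt_irrefl _ hfy
    have hker : vectorSpan ℝ S ≤ LinearMap.ker (f : (Fin d → ℝ) →ₗ[ℝ] ℝ) :=
      vectorSpan_le_ker f M S (fun v hv => hv.2)
    by_cases hdim : finrank ℝ (vectorSpan ℝ S) + 1 = d
    · exact ⟨f, M, hle, ⟨s₀, hs₀V, hs₀⟩, hfy, hdim⟩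
    have hklt : finrank ℝ (vectorSpan ℝ S) + 1 < d := by
      have h1 : finrank ℝ (vectorSpan ℝ S) ≤ finrank ℝ (LinearMap.ker (f : (Fin d → ℝ) →ₗ[ℝ] ℝ)) :=
        Submodule.finrank_mono hker
      have h2 := finrank_ker_add_one f hfne
      omega
    have hWne : vectorSpan ℝ (insert y S) ≠ ⊤ := by
      have hb : finrank ℝ (vectorSpan ℝ (insert y S)) ≤ finrank ℝ (vectorSpan ℝ S) + 1 :=
        finrank_vectorSpan_insert_le_set ℝ S y
      intro h
      rw [h, finrank_top] at hb
      rw [Module.finrank_fin_fun ℝ] at hb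
      omega
    obtain ⟨g, hg0, hgW⟩ := exists_functional_vanishing hWne
    set c := g s₀ with hcdef
    have hs₀S : s₀ ∈ S := ⟨hs₀V, hs₀⟩
    have hgS : ∀ v ∈ S, g v = c := by
      intro v hv
      have hm : v -ᵥ s₀ ∈ vectorSpan ℝ (insert y S) :=
        vsub_mem_vectorSpan ℝ (Set.mem_insert_of_mem _ hv) (Set.mem_insert_of_mem _ hs₀S)
      have := hgW _ hm
      simp only [vsub_eq_sub, map_sub] at this
      linarith
    have hgy : g y = c := by
      have hm : y -ᵥ s₀ ∈ vectorSpan ℝ (insert y S) :=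
        vsub_mem_vectorSpan ℝ (Set.mem_insert _ _) (Set.mem_insert_of_mem _ hs₀S)
      have := hgW _ hm
      simp only [vsub_eq_sub, map_sub] at this
      linarith
    have hT : ∃ v ∈ V, g v ≠ c := by
      by_contra h
      push_neg at h
      have hle' : vectorSpan ℝ (V : Set (Fin d → ℝ)) ≤ LinearMap.ker (g : (Fin d → ℝ) →ₗ[ℝ] ℝ) :=
        vectorSpan_le_ker g c _ (fun v hv => h v hv)
      rw [hVtop, top_le_iff] at hle'
      apply hg0
      ext x
      have : x ∈ LinearMap.ker (g : (Fin d → ℝ) →ₗ[ℝ] ℝ) := hle' ▸ Submodule.mem_top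
      simpa using this
    obtain ⟨w₀, hw₀V, hw₀g⟩ := hT
    set T := V.filter fun v => g v ≠ c with hTdef
    have hTne : T.Nonempty := ⟨w₀, Finset.mem_filter.2 ⟨hw₀V, hw₀g⟩⟩
    obtain ⟨v₀, hv₀T, hv₀min⟩ := T.exists_min_image (fun v => |(M - f v) / (g v - c)|) hTne
    obtain ⟨hv₀V, hv₀g⟩ := Finset.mem_filter.1 hv₀T
    set t := (M - f v₀) / (g v₀ - c) with htdef
    have hv₀S : v₀ ∉ S := fun h => hv₀g (hgS _ h)
    have hfv₀ : f v₀ < M := lt_of_le_of_ne (hle _ hv₀V) (fun h => hv₀S ⟨hv₀V, h⟩)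
    have hgc0 : g v₀ - c ≠ 0 := sub_ne_zero.2 hv₀g
    set f' := f + t • g with hf'def
    set M' := M + t * c with hM'def
    have hf'app : ∀ x, f' x = f x + t * g x := by intro x; simp [hf'def]
    have hS'f : ∀ v ∈ S, f' v = M' := by
      intro v hv
      rw [hf'app, hv.2, hgS v hv]
    have htv₀ : t * (g v₀ - c) = M - f v₀ := div_mul_cancel₀ _ hgc0
    have hf'v₀ : f' v₀ = M' := by
      rw [hf'app]
      have : t * g v₀ = t * c + (M - f v₀) := by rw [← htv₀]; ring
      rw [this]; ring
    have hle' : ∀ v ∈ V, f' v ≤ M' := by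
      intro v hv
      by_cases hvS : v ∈ S
      · exact le_of_eq (hS'f v hvS)
      have hfv : f v < M := lt_of_le_of_ne (hle v hv) (fun h => hvS ⟨hv, h⟩)
      by_cases hgv : g v = c
      · rw [hf'app, hgv, hM'def]; linarith
      · have hmin := hv₀min v (Finset.mem_filter.2 ⟨hv, hgv⟩)
        have hgvc : g v - c ≠ 0 := sub_ne_zero.2 hgv
        have habs : |(M - f v) / (g v - c)| * |g v - c| = M - f v := by
          rw [← abs_mul, div_mul_cancel₀ _ hgvc, abs_of_pos (by linarith)]
        have h1 : t * (g v - c) ≤ M - f v := by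
          calc t * (g v - c) ≤ |t * (g v - c)| := le_abs_self _
            _ = |t| * |g v - c| := abs_mul _ _
            _ ≤ |(M - f v) / (g v - c)| * |g v - c| := by
                apply mul_le_mul_of_nonneg_right hmin (abs_nonneg _)
            _ = M - f v := habs
        rw [hf'app, hM'def]
        nlinarith [h1]
    have hfy' : M' < f' y := by
      rw [hf'app, hgy, hM'def]
      linarith
    have hsub : (V.filter fun v => f' v ≠ M') ⊆ (V.filter fun v => f v ≠ M).erase v₀ := by
      intro v hv
      obtain ⟨hvV, hvne⟩ := Finset.mem_filter.1 hv
      refine Finset.mem_erase.2 ⟨?_, Finset.mem_filter.2 ⟨hvV, ?_⟩⟩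
      · rintro rfl; exact hvne hf'v₀
      · intro h; exact hvne (hS'f v ⟨hvV, h⟩)
    have hcard' : (V.filter fun v => f' v ≠ M').card ≤ k := by
      have h1 := Finset.card_le_card hsub
      have h2 : v₀ ∈ V.filter fun v => f v ≠ M :=
        Finset.mem_filter.2 ⟨hv₀V, fun h => hv₀S ⟨hv₀V, h⟩⟩
      have h3 := Finset.card_erase_of_mem h2
      omega
    exact ih f' M' hle' ⟨v₀, hv₀V, hf'v₀⟩ hfy' hcard'

lemma exists_violated_facet {d : ℕ} (V : Finset (Fin d → ℝ)) (y : Fin d → ℝ)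
    (hVne : V.Nonempty)
    (hVtop : vectorSpan ℝ (V : Set (Fin d → ℝ)) = ⊤)
    (hy : y ∉ convexHull ℝ (V : Set (Fin d → ℝ))) :
    ∃ (f : (Fin d → ℝ) →L[ℝ] ℝ) (M : ℝ),
      (∀ v ∈ V, f v ≤ M) ∧ (∃ v ∈ V, f v = M) ∧ M < f y ∧
      finrank ℝ (vectorSpan ℝ {v : Fin d → ℝ | v ∈ V ∧ f v = M}) + 1 = d := by
  obtain ⟨f, u, hfu, huy⟩ := _root_.geometric_hahn_banach_closed_point
    (convex_convexHull ℝ (V : Set (Fin d → ℝ)))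
    ((V.finite_toSet.isCompact_convexHull (𝕜 := ℝ)).isClosed) hy
  set M := V.sup' hVne f with hMdef
  obtain ⟨v₀, hv₀, hMv⟩ := V.exists_mem_eq_sup' hVne f
  have hle : ∀ v ∈ V, f v ≤ M := fun v hv => Finset.le_sup' f hv
  have hMy : M < f y := by
    have h1 := hfu v₀ (subset_convexHull ℝ _ hv₀)
    rw [hMdef, ← hMv] at *
    linarith
  exact tilt V y hVtop V.card f M hle ⟨v₀, hv₀, hMv.symm⟩ hMy
    (Finset.card_le_card (Finset.filter_subset _ _))

lemma face_subset_hull {d : ℕ} (V : Finset (Fin d → ℝ)) (f : (Fin d → ℝ) →L[ℝ] ℝ) (M : ℝ)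
    (hle : ∀ v ∈ V, f v ≤ M) {x : Fin d → ℝ}
    (hx : x ∈ convexHull ℝ (V : Set (Fin d → ℝ))) (hfx : f x = M) :
    x ∈ convexHull ℝ {v : Fin d → ℝ | v ∈ V ∧ f v = M} := by
  rw [Finset.convexHull_eq] at hx
  obtain ⟨w, hw0, hw1, hcm⟩ := hx
  rw [Finset.centerMass_eq_of_sum_1 _ _ hw1] at hcm
  have hfsum : ∑ v ∈ V, w v * f v = M := by
    rw [← hfx, ← hcm]
    rw [map_sum]
    simp [map_smul]
  have hzero : ∀ v ∈ V, w v * (M - f v) = 0 := by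
    apply (Finset.sum_eq_zero_iff_of_nonneg ?_).1
    · have : ∑ v ∈ V, w v * (M - f v) = M * (∑ v ∈ V, w v) - ∑ v ∈ V, w v * f v := by
        rw [Finset.mul_sum, ← Finset.sum_sub_distrib]
        apply Finset.sum_congr rfl
        intro v _; ring
      rw [this, hw1, hfsum]; ring
    · intro v hv
      exact mul_nonneg (hw0 v hv) (sub_nonneg.2 (hle v hv))
  have hkey : ∀ v ∈ V, f v ≠ M → w v = 0 := by
    intro v hv hne
    rcases mul_eq_zero.1 (hzero v hv) with h | h
    · exact h
    · exact absurd (by linarith : f v = M) hne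
  set V' := V.filter fun v => f v = M with hV'def
  have hsum' : ∑ v ∈ V', w v = 1 := by
    rw [← hw1]
    apply Finset.sum_subset (Finset.filter_subset _ _)
    intro v hv hv'
    exact hkey v hv (by simpa [hV'def, Finset.mem_filter, hv] using hv')
  have hx' : x = ∑ v ∈ V', w v • v := by
    rw [← hcm]
    symm
    apply Finset.sum_subset (Finset.filter_subset _ _)
    intro v hv hv'
    rw [hkey v hv (by simpa [hV'def, Finset.mem_filter, hv] using hv'), zero_smul]
  have hmem := V'.centerMass_mem_convexHull (w := w) (z := id)
    (fun v hv => hw0 v (Finset.mem_filter.1 hv).1)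
    (by rw [hsum']; norm_num)
    (fun v hv => by
      obtain ⟨h1, h2⟩ := Finset.mem_filter.1 hv
      exact show v ∈ {v : Fin d → ℝ | v ∈ V ∧ f v = M} from ⟨h1, h2⟩)
  rw [Finset.centerMass_eq_of_sum_1 _ _ hsum'] at hmem
  simpa [← hx'] using hmem

lemma combo_mem {d : ℕ} {K B : Set (Fin d → ℝ)} (hKconv : Convex ℝ K) (hBK : B ⊆ K)
    (f : (Fin d → ℝ) →L[ℝ] ℝ) {M r : ℝ} {z q w : Fin d → ℝ} (hq : q ∈ K)
    (hB : ∀ x, f x = M → ‖x - z‖ < r → x ∈ B)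
    {θ : ℝ} (hθ0 : 0 ≤ θ) (hθ1 : θ < 1)
    (hfw : f w - M = θ * (f q - M))
    (hnorm : ‖w - z‖ + θ * (‖q - z‖ + r) < r) :
    w ∈ K := by
  have h1θ : (0:ℝ) < 1 - θ := by linarith
  set p := (1 - θ)⁻¹ • (w - θ • q) with hpdef
  have hfp : f p = M := by
    rw [hpdef, map_smul, map_sub, map_smul]
    have h : f w - θ * f q = (1 - θ) * M := by nlinarith [hfw]
    rw [smul_eq_mul, smul_eq_mul, h]
    field_simp
  have hpz : p - z = (1 - θ)⁻¹ • ((w - z) - θ • (q - z)) := by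
    rw [hpdef]
    match_scalars <;> (field_simp; try ring)
  have hpzr : ‖p - z‖ < r := by
    rw [hpz, norm_smul]
    have h1 : ‖(1 - θ)⁻¹‖ = (1 - θ)⁻¹ := by
      rw [Real.norm_eq_abs, abs_of_pos (inv_pos.2 h1θ)]
    rw [h1]
    have h2 : ‖(w - z) - θ • (q - z)‖ ≤ ‖w - z‖ + θ * ‖q - z‖ := by
      calc ‖(w - z) - θ • (q - z)‖ ≤ ‖w - z‖ + ‖θ • (q - z)‖ := norm_sub_le _ _
        _ = ‖w - z‖ + θ * ‖q - z‖ := by rw [norm_smul, Real.norm_eq_abs, abs_of_nonneg hθ0]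
    have h3 : ‖w - z‖ + θ * ‖q - z‖ < r * (1 - θ) := by nlinarith [hnorm]
    calc (1 - θ)⁻¹ * ‖(w - z) - θ • (q - z)‖ ≤ (1 - θ)⁻¹ * (‖w - z‖ + θ * ‖q - z‖) := by
          apply mul_le_mul_of_nonneg_left h2 (le_of_lt (inv_pos.2 h1θ))
      _ < (1 - θ)⁻¹ * (r * (1 - θ)) := by
          apply (mul_lt_mul_iff_right₀ (inv_pos.2 h1θ)).2 h3
      _ = r := by field_simp
  have hw : w = (1 - θ) • p + θ • q := by
    rw [hpdef]
    match_scalars <;> (field_simp; try ring)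
  rw [hw]
  exact hKconv (hBK (hB p hfp hpzr)) hq (by linarith) hθ0 (by ring)

lemma theta_lt {x s ε cf aa : ℝ} (hx : x ≤ cf * s) (hs0 : 0 ≤ s) (hs : s < ε) (hcf : 0 ≤ cf)
    (hεa : ε ≤ aa / (2 * (cf + 1))) (ha : 0 < aa) : x < aa := by
  have hε0 : 0 < ε := lt_of_le_of_lt hs0 hs
  have h1 : cf * s < (cf + 1) * ε := by nlinarith
  have h2 : (cf + 1) * ε ≤ (cf + 1) * (aa / (2 * (cf + 1))) := by nlinarith
  have h3 : (cf + 1) * (aa / (2 * (cf + 1))) = aa / 2 := by field_simp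
  linarith

lemma ball_arith {s ε r aa cf ry rx bb cc θ : ℝ}
    (hs : 0 ≤ s) (hsε : s < ε) (hr : 0 < r) (ha : 0 < aa) (hb : 0 < bb)
    (hcf : 0 ≤ cf) (hry : 0 ≤ ry) (hrx : 0 ≤ rx)
    (hcc : cc = 1 + cf * (ry + r) / aa + cf * (rx + r) / bb)
    (hεr : ε ≤ r / (2 * cc))
    (hθ0 : 0 ≤ θ) (hθ : θ ≤ cf * s / aa) :
    s + θ * (ry + r) < r := by
  have hx1 : 0 ≤ cf * (ry + r) / aa := by positivity
  have hx2 : 0 ≤ cf * (rx + r) / bb := by positivity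
  have hccpos : 0 < cc := by rw [hcc]; linarith
  have h5 : θ * (ry + r) ≤ cf * s / aa * (ry + r) :=
    mul_le_mul_of_nonneg_right hθ (by linarith)
  have h6 : s + cf * s / aa * (ry + r) = s * (1 + cf * (ry + r) / aa) := by
    field_simp
  have h7 : 1 + cf * (ry + r) / aa ≤ cc := by rw [hcc]; linarith
  have h8 : s * (1 + cf * (ry + r) / aa) ≤ s * cc := mul_le_mul_of_nonneg_left h7 hs
  have h9 : s * cc < ε * cc := mul_lt_mul_of_pos_right hsε hccpos
  have h10 : ε * (2 * cc) ≤ r := (le_div_iff₀ (by linarith)).1 hεr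
  linarith

end Statement13Aux

open Statement13Aux Module Set in
set_option maxHeartbeats 1000000 in
/-- every strongly blocked lattice-free polytope is maximal lattice-free. -/
theorem statement13 {d : ℕ} (P : Set (Fin d → ℝ)) (hpoly : IsPolytope P)
    (hlf : IsLatticeFree P) (hsb : IsStronglyBlocked P) :
    IsMaxLatticeFree P := by
  refine ⟨hlf, ?_⟩
  intro K hK hPK
  by_contra hne
  obtain ⟨hPc, hPconv, hPint, hPlat⟩ := hlf
  obtain ⟨hKc, hKconv, hKint, hKlat⟩ := hK
  have hy : ∃ y, y ∈ K ∧ y ∉ P := by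
    by_contra h
    push_neg at h
    exact hne (Set.Subset.antisymm hPK h)
  obtain ⟨y, hyK, hyP⟩ := hy
  obtain ⟨V, rfl⟩ := hpoly
  set P := convexHull ℝ (V : Set (Fin d → ℝ)) with hPdef
  -- spans
  have hspan : affineSpan ℝ P = ⊤ :=
    (hPconv.interior_nonempty_iff_affineSpan_eq_top).1 hPint
  have hVtop : vectorSpan ℝ (V : Set (Fin d → ℝ)) = ⊤ := by
    rw [← direction_affineSpan, ← affineSpan_convexHull, ← hPdef, hspan,
      AffineSubspace.direction_top]
  have hVne : V.Nonempty := by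
    by_contra h
    rw [Finset.not_nonempty_iff_eq_empty] at h
    rw [hPdef, h] at hPint
    simp at hPint
  obtain ⟨f, M, hle, hex, hMy, hrank⟩ := exists_violated_facet V y hVne hVtop hyP
  set S : Set (Fin d → ℝ) := {v | v ∈ V ∧ f v = M} with hSdef
  have hfP : ∀ x ∈ P, f x ≤ M := by
    intro x hx
    exact convexHull_min (fun v hv => hle v hv)
      (convex_halfSpace_le (LinearMap.isLinear (f : (Fin d → ℝ) →ₗ[ℝ] ℝ)) M) hx
  set F := {x ∈ P | ∀ p ∈ P, f p ≤ f x} with hFdef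
  obtain ⟨s₀, hs₀V, hs₀M⟩ := hex
  have hs₀P : s₀ ∈ P := subset_convexHull ℝ _ hs₀V
  have hFeq : F = {x ∈ P | f x = M} := by
    ext x
    constructor
    · rintro ⟨hxP, hmax⟩
      exact ⟨hxP, le_antisymm (hfP x hxP) (hs₀M ▸ hmax s₀ hs₀P)⟩
    · rintro ⟨hxP, hfx⟩
      exact ⟨hxP, fun p hp => hfx ▸ hfP p hp⟩
  have hFhull : F = convexHull ℝ S := by
    rw [hFeq]
    ext x
    constructor
    · rintro ⟨hxP, hfx⟩
      exact face_subset_hull V f M hle hxP hfx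
    · intro hx
      refine ⟨convexHull_mono (fun v hv => hv.1) hx, ?_⟩
      have h1 : x ∈ {x : Fin d → ℝ | f x = M} :=
        convexHull_min (fun v hv => hv.2)
          (convex_hyperplane (LinearMap.isLinear (f : (Fin d → ℝ) →ₗ[ℝ] ℝ)) M) hx
      exact h1
  have hFconv : Convex ℝ F := hFhull ▸ convex_convexHull ℝ S
  have hFP : F ⊆ P := fun x hx => hx.1
  have hFfacet : IsFacet P F := by
    refine ⟨fun _ => ⟨f, rfl⟩, ⟨s₀, ?_⟩, ?_⟩
    · rw [hFeq]; exact ⟨hs₀P, hs₀M⟩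
    · rw [hFhull]
      have h2 : vectorSpan ℝ (convexHull ℝ S) = vectorSpan ℝ S := by
        rw [← direction_affineSpan, affineSpan_convexHull, direction_affineSpan]
      rw [h2]
      exact hrank
  obtain ⟨-, hdim, z, hzrel, hzint⟩ := hsb F hFfacet
  have hzIH : z ∈ intHull F := intrinsicInterior_subset hzrel
  have hIHF : intHull F ⊆ F := convexHull_min Set.inter_subset_left hFconv
  have hzF : z ∈ F := hIHF hzIH
  have hfz : f z = M := (hFeq ▸ hzF).2
  have hfne0 : f ≠ 0 := by
    intro h
    rw [hFeq] at hzF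
    have h1 : f y = 0 := by rw [h]; rfl
    have h2 : f z = 0 := by rw [h]; rfl
    rw [h2] at hfz
    rw [h1, ← hfz] at hMy
    exact lt_irrefl _ hMy
  -- the hyperplane
  set A := affineSpan ℝ (intHull F) with hAdef
  set H := AffineSubspace.mk' z (LinearMap.ker (f : (Fin d → ℝ) →ₗ[ℝ] ℝ)) with hHdef
  have hmemH : ∀ x, x ∈ H ↔ f x = M := by
    intro x
    rw [hHdef, AffineSubspace.mem_mk']
    simp only [LinearMap.mem_ker, ContinuousLinearMap.coe_coe, vsub_eq_sub, map_sub, hfz, sub_eq_zero]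
  have hAH : A ≤ H := by
    rw [hAdef]
    apply affineSpan_le.2
    intro x hx
    exact (hmemH x).2 ((hFeq ▸ hIHF hx).2)
  have hdireq : A.direction = H.direction := by
    apply Submodule.eq_of_le_of_finrank_le (AffineSubspace.direction_le hAH)
    rw [hHdef, AffineSubspace.direction_mk', hAdef, direction_affineSpan]
    have h1 := finrank_ker_add_one f hfne0
    omega
  have hAeqH : A = H := by
    apply AffineSubspace.ext_of_direction_eq hdireq
    exact ⟨z, subset_affineSpan ℝ _ hzIH, AffineSubspace.self_mem_mk' _ _⟩
  -- flat ball
  obtain ⟨z', hz'int, hz'eq⟩ := hzrel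
  obtain ⟨r, hrpos, hrball⟩ := Metric.mem_nhds_iff.1 (mem_interior_iff_mem_nhds.1 hz'int)
  have hflat : ∀ x, f x = M → ‖x - z‖ < r → x ∈ intHull F := by
    intro x hfx hxz
    have hxA : x ∈ A := by rw [hAeqH]; exact (hmemH x).2 hfx
    have hmem : (⟨x, hxA⟩ : A) ∈ Metric.ball z' r := by
      rw [Metric.mem_ball, Subtype.dist_eq, hz'eq, dist_eq_norm]
      exact hxz
    exact hrball hmem
  -- interior point with f < M
  obtain ⟨x₀, hx₀int⟩ := hPint
  have hx₀P : x₀ ∈ P := interior_subset hx₀int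
  have hfx₀ : f x₀ < M := by
    rcases lt_or_eq_of_le (hfP x₀ hx₀P) with h | h
    · exact h
    exfalso
    obtain ⟨δ, hδpos, hδball⟩ := Metric.mem_nhds_iff.1 (mem_interior_iff_mem_nhds.1 hx₀int)
    set v := y - z with hvdef
    have hfv : 0 < f v := by
      rw [hvdef, map_sub, hfz]; linarith
    have hvn : (0:ℝ) < ‖v‖ + 1 := by positivity
    set κ := δ / (2 * (‖v‖ + 1)) with hκdef
    have hκpos : 0 < κ := by positivity
    set u := x₀ + κ • v with hudef
    have hu : u ∈ P := by
      apply hδball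
      rw [Metric.mem_ball, dist_eq_norm]
      have : u - x₀ = κ • v := by rw [hudef]; abel
      rw [this, norm_smul, Real.norm_eq_abs, abs_of_pos hκpos]
      have h1 : κ * ‖v‖ < κ * (‖v‖ + 1) := by nlinarith
      have h2 : κ * (‖v‖ + 1) = δ / 2 := by rw [hκdef]; field_simp
      linarith
    have hfu : f u = f x₀ + κ * f v := by
      rw [hudef, map_add, map_smul, smul_eq_mul]
    have := hfP u hu
    nlinarith
  -- the ball around z inside K
  have hIHP : intHull F ⊆ P := hIHF.trans hFP
  have hIHK : intHull F ⊆ K := hIHP.trans hPK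
  set a := f y - M with hadef
  have hapos : 0 < a := by rw [hadef]; linarith
  set b0 := M - f x₀ with hbdef
  have hbpos : 0 < b0 := by rw [hbdef]; linarith
  set Ry := ‖y - z‖ with hRy
  set Rx := ‖x₀ - z‖ with hRx
  set Cf := ‖f‖ with hCf
  have hCf0 : (0:ℝ) ≤ Cf := norm_nonneg f
  have hRy0 : (0:ℝ) ≤ Ry := norm_nonneg _
  have hRx0 : (0:ℝ) ≤ Rx := norm_nonneg _
  set CC := 1 + Cf * (Ry + r) / a + Cf * (Rx + r) / b0 with hCC
  have hCCpos : (0:ℝ) < CC := by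
    have h1 : 0 ≤ Cf * (Ry + r) / a := by positivity
    have h2 : 0 ≤ Cf * (Rx + r) / b0 := by positivity
    rw [hCC]; linarith
  set ε := min (min (r / (2 * CC)) (a / (2 * (Cf + 1)))) (b0 / (2 * (Cf + 1))) with hε
  have hεpos : 0 < ε := by
    have hc2 : (0:ℝ) < 2 * CC := by linarith
    have hc3 : (0:ℝ) < 2 * (Cf + 1) := by linarith
    exact lt_min (lt_min (div_pos hrpos hc2) (div_pos hapos hc3)) (div_pos hbpos hc3)
  have hεr : ε ≤ r / (2 * CC) := le_trans (min_le_left _ _) (min_le_left _ _)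
  have hεa : ε ≤ a / (2 * (Cf + 1)) := le_trans (min_le_left _ _) (min_le_right _ _)
  have hεb : ε ≤ b0 / (2 * (Cf + 1)) := min_le_right _ _
  have hKball : Metric.ball z ε ⊆ K := by
    intro w hw
    rw [Metric.mem_ball, dist_eq_norm] at hw
    have hwz0 : (0:ℝ) ≤ ‖w - z‖ := norm_nonneg _
    have hfwz : |f w - M| ≤ Cf * ‖w - z‖ := by
      have h1 := f.le_opNorm (w - z)
      rw [map_sub, hfz] at h1
      calc |f w - M| = ‖f w - M‖ := (Real.norm_eq_abs _).symm
        _ ≤ Cf * ‖w - z‖ := h1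
    rcases le_or_gt M (f w) with hcase | hcase
    · -- q = y
      set θ := (f w - M) / a with hθ
      have hθ0 : 0 ≤ θ := div_nonneg (by linarith) hapos.le
      have hfwM : f w - M ≤ Cf * ‖w - z‖ := le_trans (le_abs_self _) hfwz
      have hθ1 : θ < 1 := by
        rw [hθ, div_lt_one hapos]
        exact theta_lt hfwM hwz0 hw hCf0 hεa hapos
      refine combo_mem hKconv hIHK f hyK hflat hθ0 hθ1 ?_ ?_
      · rw [hθ, ← hadef]; field_simp
      · have hθle : θ ≤ Cf * ‖w - z‖ / a := by
          rw [hθ]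
          exact (div_le_div_iff_of_pos_right hapos).2 hfwM
        exact ball_arith hwz0 hw hrpos hapos hbpos hCf0 hRy0 hRx0 hCC hεr hθ0 hθle
    · -- q = x₀
      set θ := (M - f w) / b0 with hθ
      have hθ0 : 0 ≤ θ := div_nonneg (by linarith) hbpos.le
      have hfwM : M - f w ≤ Cf * ‖w - z‖ := by
        rw [abs_sub_comm] at hfwz
        exact le_trans (le_abs_self _) hfwz
      have hθ1 : θ < 1 := by
        rw [hθ, div_lt_one hbpos]
        exact theta_lt hfwM hwz0 hw hCf0 hεb hbpos
      refine combo_mem hKconv hIHK f (hPK hx₀P) hflat hθ0 hθ1 ?_ ?_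
      · rw [hθ]
        have : f x₀ - M = -b0 := by rw [hbdef]; ring
        rw [this]
        field_simp
        ring
      · have hθle : θ ≤ Cf * ‖w - z‖ / b0 := by
          rw [hθ]
          exact (div_le_div_iff_of_pos_right hbpos).2 hfwM
        have hCC2 : CC = 1 + Cf * (Rx + r) / b0 + Cf * (Ry + r) / a := by rw [hCC]; ring
        exact ball_arith hwz0 hw hrpos hbpos hapos hCf0 hRx0 hRy0 hCC2 hεr hθ0 hθle
  have hzK : z ∈ interior K :=
    mem_interior.2 ⟨Metric.ball z ε, hKball, Metric.isOpen_ball, Metric.mem_ball_self hεpos⟩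
  have hmem : z ∈ interior K ∩ latticePts d := ⟨hzK, hzint⟩
  rw [hKlat] at hmem
  exact hmem
end

section
/- Let d ≥ 2, let a ∈ ℕ^d with a_1 ≤ ⋯ ≤ a_d and 1/a_1 + ⋯ + 1/a_d = 1, set t = a_d, and suppose t is odd. Then the all-ones vector 1_{d+1} = (1, …, 1) ∈ ℝ^{d+1} lies in the relative interior of the d-dimensional simplex G = conv{a_1 e_1, …, a_{d−1} e_{d−1}, ((3t−1)/2) e_d + e_{d+1}, 3t e_{d+1}} ⊆ ℝ^{d+1}; in fact, 1_{d+1} = Σ_{i=1}^{d−1} (1/a_i)(a_i e_i) + λ(((3t−1)/2) e_d + e_{d+1}) + μ(3t e_{d+1}) with λ = 2/(3t−1) > 0, μ = (t−1)/(t(3t−1)) > 0, and Σ_{i=1}^{d−1} 1/a_i + λ + μ = 1. -/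
open scoped BigOperators

noncomputable section
namespace St16

variable {m : ℕ}

def idx1 (m : ℕ) : Fin (m + 3) := ⟨m + 1, Nat.add_lt_add_left (by decide) m⟩
def idx2 (m : ℕ) : Fin (m + 3) := Fin.last (m + 2)

def vw (m : ℕ) (t : ℝ) : Fin (m + 3) → ℝ :=
  ((3 * t - 1) / 2) • (Pi.single (idx1 m) 1 : Fin (m + 3) → ℝ) +
    (Pi.single (idx2 m) 1 : Fin (m + 3) → ℝ)
def vu (m : ℕ) (t : ℝ) : Fin (m + 3) → ℝ := (3 * t) • (Pi.single (idx2 m) 1 : Fin (m + 3) → ℝ)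
def v0 (α : Fin (m + 1) → ℝ) : Fin (m + 1) → Fin (m + 3) → ℝ :=
  fun i => α i • (Pi.single i.castSucc.castSucc 1 : Fin (m + 3) → ℝ)
def vv (α : Fin (m + 1) → ℝ) (t : ℝ) : Fin (m + 3) → Fin (m + 3) → ℝ :=
  Fin.snoc (Fin.snoc (v0 α) (vw m t)) (vu m t)

def b0 (α : Fin (m + 1) → ℝ) : Fin (m + 1) → (Fin (m + 3) → ℝ) → ℝ :=
  fun i x => (α i)⁻¹ * x i.castSucc.castSucc
def bw (m : ℕ) (t : ℝ) : (Fin (m + 3) → ℝ) → ℝ := fun x => 2 / (3 * t - 1) * x (idx1 m)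
def bu (m : ℕ) (t : ℝ) : (Fin (m + 3) → ℝ) → ℝ :=
  fun x => (3 * t)⁻¹ * x (idx2 m) - 2 / ((3 * t - 1) * (3 * t)) * x (idx1 m)
def bb (α : Fin (m + 1) → ℝ) (t : ℝ) : Fin (m + 3) → (Fin (m + 3) → ℝ) → ℝ :=
  Fin.snoc (Fin.snoc (b0 α) (bw m t)) (bu m t)

-- pointwise values
lemma vw_apply (t : ℝ) (k : Fin (m + 3)) :
    vw m t k = if (k : ℕ) = m + 1 then (3 * t - 1) / 2 else if (k : ℕ) = m + 2 then 1 else 0 := by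
  simp only [vw, Pi.add_apply, Pi.smul_apply, Pi.single_apply, smul_eq_mul, idx1, idx2,
    Fin.ext_iff, Fin.val_last]
  split_ifs <;> simp_all

lemma vu_apply (t : ℝ) (k : Fin (m + 3)) :
    vu m t k = if (k : ℕ) = m + 2 then 3 * t else 0 := by
  simp only [vu, Pi.smul_apply, Pi.single_apply, smul_eq_mul, idx2, Fin.ext_iff, Fin.val_last]
  split_ifs <;> simp_all

lemma v0_apply (α : Fin (m + 1) → ℝ) (i : Fin (m + 1)) (k : Fin (m + 3)) :
    v0 α i k = if (k : ℕ) = (i : ℕ) then α i else 0 := by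
  simp only [v0, Pi.smul_apply, Pi.single_apply, smul_eq_mul, Fin.ext_iff,
    Fin.coe_castSucc]
  split_ifs <;> simp_all


variable {α : Fin (m + 1) → ℝ} {t : ℝ}

lemma bb_castSucc_castSucc (i : Fin (m + 1)) (x : Fin (m + 3) → ℝ) :
    bb α t i.castSucc.castSucc x = (α i)⁻¹ * x i.castSucc.castSucc := by
  simp [bb, Fin.snoc_castSucc, b0]

lemma sum_expand {β : Type*} [AddCommMonoid β] (f : Fin (m + 3) → β) :
    ∑ j, f j = (∑ i : Fin (m + 1), f i.castSucc.castSucc) +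
      f (Fin.last (m + 1)).castSucc + f (Fin.last (m + 2)) := by
  rw [Fin.sum_univ_castSucc, Fin.sum_univ_castSucc]

lemma bb_mid (x : Fin (m + 3) → ℝ) :
    bb α t (Fin.last (m + 1)).castSucc x = bw m t x := by
  simp only [bb, Fin.snoc_castSucc, Fin.snoc_last]

lemma bb_last (x : Fin (m + 3) → ℝ) : bb α t (Fin.last (m + 2)) x = bu m t x := by
  simp only [bb, Fin.snoc_last]

lemma vv_castSucc_castSucc (i : Fin (m + 1)) : vv α t i.castSucc.castSucc = v0 α i := by
  simp only [vv, Fin.snoc_castSucc]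

lemma vv_mid : vv α t (Fin.last (m + 1)).castSucc = vw m t := by
  simp only [vv, Fin.snoc_castSucc, Fin.snoc_last]

lemma vv_last : vv α t (Fin.last (m + 2)) = vu m t := by
  simp only [vv, Fin.snoc_last]


lemma ht_facts (ht : 2 ≤ t) : t ≠ 0 ∧ 3 * t - 1 ≠ 0 ∧ (0:ℝ) < t ∧ (0:ℝ) < 3 * t - 1 := by
  refine ⟨by linarith, by linarith, by linarith, by linarith⟩

lemma key_identity (hα : ∀ i, α i ≠ 0) (ht : 2 ≤ t) (x : Fin (m + 3) → ℝ) :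
    ∑ j, bb α t j x • vv α t j = x := by
  obtain ⟨ht0, ht1, -, -⟩ := ht_facts ht
  rw [sum_expand (fun j => bb α t j x • vv α t j)]
  funext k
  simp only [Pi.add_apply, Finset.sum_apply, Pi.smul_apply, smul_eq_mul,
    bb_castSucc_castSucc, bb_mid, bb_last, vv_castSucc_castSucc, vv_mid, vv_last,
    v0_apply, vw_apply, vu_apply, bw, bu]
  rcases show (k : ℕ) < m + 1 ∨ (k : ℕ) = m + 1 ∨ (k : ℕ) = m + 2 by omega with hk | hk | hk
  · set i0 : Fin (m + 1) := ⟨(k : ℕ), hk⟩ with hi0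
    have hkk : i0.castSucc.castSucc = k := by
      simp [Fin.ext_iff, hi0]
    have h1 : ∀ i : Fin (m + 1), ((k : ℕ) = (i : ℕ)) = (i = i0) := by
      intro i; simp [Fin.ext_iff, hi0, eq_comm]
    have hne1 : ¬((k : ℕ) = m + 1) := by omega
    have hne2 : ¬((k : ℕ) = m + 2) := by omega
    simp only [h1, mul_ite, mul_zero, Finset.sum_ite_eq', Finset.mem_univ, if_true, hkk,
      if_neg hne1, if_neg hne2, add_zero]
    field_simp
    rw [mul_comm, mul_div_assoc, div_self (hα i0), mul_one]
  · have hk1 : idx1 m = k := by simp [idx1, Fin.ext_iff, hk]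
    simp only [hk]
    rw [Finset.sum_eq_zero (fun i _ => by rw [if_neg (by omega), mul_zero]), hk1]
    norm_num
    field_simp
  · have hk2 : idx2 m = k := by simp [idx2, Fin.ext_iff, hk]
    simp only [hk]
    rw [Finset.sum_eq_zero (fun i _ => by rw [if_neg (by omega), mul_zero]), hk2]
    norm_num
    field_simp
    ring


def bbL (α : Fin (m + 1) → ℝ) (t : ℝ) (j : Fin (m + 3)) : (Fin (m + 3) → ℝ) →ₗ[ℝ] ℝ where
  toFun := bb α t j
  map_add' x y := by
    induction j using Fin.lastCases with
    | last => simp only [bb_last, bu, Pi.add_apply]; ring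
    | cast j' =>
      induction j' using Fin.lastCases with
      | last => simp only [bb_mid, bw, Pi.add_apply]; ring
      | cast i => simp only [bb_castSucc_castSucc, Pi.add_apply]; ring
  map_smul' c x := by
    induction j using Fin.lastCases with
    | last => simp only [bb_last, bu, Pi.smul_apply, smul_eq_mul, RingHom.id_apply]; ring
    | cast j' =>
      induction j' using Fin.lastCases with
      | last => simp only [bb_mid, bw, Pi.smul_apply, smul_eq_mul, RingHom.id_apply]; ring
      | cast i => simp only [bb_castSucc_castSucc, Pi.smul_apply, smul_eq_mul,
          RingHom.id_apply]; ring

lemma bb_continuous (j : Fin (m + 3)) : Continuous (bb α t j) :=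
  (bbL α t j).continuous_of_finiteDimensional

def Cmap (α : Fin (m + 1) → ℝ) (t : ℝ) : (Fin (m + 3) → ℝ) →ₗ[ℝ] (Fin (m + 3) → ℝ) where
  toFun g := ∑ j, g j • vv α t j
  map_add' g h := by simp [add_smul, Finset.sum_add_distrib]
  map_smul' c g := by simp [smul_smul, Finset.smul_sum]

lemma vv_linInd (hα : ∀ i, α i ≠ 0) (ht : 2 ≤ t) : LinearIndependent ℝ (vv α t) := by
  have hsurj : Function.Surjective (Cmap α t) := fun x =>
    ⟨fun j => bb α t j x, key_identity hα ht x⟩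
  have hinj : Function.Injective (Cmap α t) := LinearMap.injective_iff_surjective.2 hsurj
  rw [Fintype.linearIndependent_iff]
  intro g hg i
  have : Cmap α t g = Cmap α t 0 := by
    simp only [Cmap, LinearMap.coe_mk, AddHom.coe_mk, hg]
    simp
  have hg0 : g = 0 := hinj this
  simp [hg0]

lemma vv_affInd (hα : ∀ i, α i ≠ 0) (ht : 2 ≤ t) : AffineIndependent ℝ (vv α t) := by
  rw [affineIndependent_iff]
  intro s w hw hs e he
  have h0 : ∑ j, (if j ∈ s then w j else 0) • vv α t j = 0 := by
    calc ∑ j, (if j ∈ s then w j else 0) • vv α t j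
        = ∑ j, (if j ∈ s then w j • vv α t j else 0) := by
          refine Finset.sum_congr rfl fun j _ => ?_
          split <;> simp
      _ = ∑ e ∈ s, w e • vv α t e := by
          rw [Finset.sum_ite_mem, Finset.univ_inter]
      _ = 0 := hs
  have hz := Fintype.linearIndependent_iff.1 (vv_linInd hα ht) _ h0 e
  simpa [he] using hz

lemma vv_range : Set.range (vv α t) = Set.range (v0 α) ∪ {vw m t, vu m t} := by
  ext x
  constructor
  · rintro ⟨j, rfl⟩
    induction j using Fin.lastCases with
    | last => rw [vv_last]; exact Or.inr (Or.inr rfl)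
    | cast j' =>
      induction j' using Fin.lastCases with
      | last => rw [vv_mid]; exact Or.inr (Or.inl rfl)
      | cast i => rw [vv_castSucc_castSucc]; exact Or.inl ⟨i, rfl⟩
  · rintro (⟨i, rfl⟩ | h | h)
    · exact ⟨i.castSucc.castSucc, vv_castSucc_castSucc i⟩
    · exact ⟨(Fin.last (m + 1)).castSucc, by rw [vv_mid, h]⟩
    · exact ⟨Fin.last (m + 2), by rw [vv_last]; exact h.symm⟩

lemma sum_bb_vertex (hα : ∀ i, α i ≠ 0) (ht : 2 ≤ t) (k : Fin (m + 3)) :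
    ∑ j, bb α t j (vv α t k) = 1 := by
  obtain ⟨ht0, ht1, -, -⟩ := ht_facts ht
  rw [sum_expand]
  simp only [bb_castSucc_castSucc, bb_mid, bb_last, bw, bu]
  have hidx1 : ((idx1 m : Fin (m + 3)) : ℕ) = m + 1 := rfl
  have hidx2 : ((idx2 m : Fin (m + 3)) : ℕ) = m + 2 := rfl
  have hcc : ∀ i : Fin (m + 1), ((i.castSucc.castSucc : Fin (m + 3)) : ℕ) = (i : ℕ) := by
    intro i; simp
  induction k using Fin.lastCases with
  | last =>
    rw [vv_last]
    simp only [vu_apply, hidx1, hidx2, hcc]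
    rw [Finset.sum_eq_zero (fun i _ => by
      have hi := i.isLt
      rw [if_neg (by omega), mul_zero])]
    norm_num
    field_simp
  | cast j' =>
    induction j' using Fin.lastCases with
    | last =>
      rw [vv_mid]
      simp only [vw_apply, hidx1, hidx2, hcc]
      rw [Finset.sum_eq_zero (fun i _ => by
        have hi := i.isLt
        rw [if_neg (by omega), if_neg (by omega), mul_zero])]
      norm_num
      field_simp
      ring
    | cast i0 =>
      rw [vv_castSucc_castSucc]
      simp only [v0_apply, hidx1, hidx2, hcc]
      have hlt := i0.isLt
      rw [if_neg (by omega), if_neg (by omega)]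
      have h1 : ∀ i : Fin (m + 1), (((i : ℕ)) = ((i0 : ℕ))) = (i = i0) := by
        intro i; simp [Fin.ext_iff]
      simp only [h1, mul_ite, mul_zero, Finset.sum_ite_eq', Finset.mem_univ, if_true]
      rw [inv_mul_cancel₀ (hα i0)]
      ring


def sbL (α : Fin (m + 1) → ℝ) (t : ℝ) : (Fin (m + 3) → ℝ) →ₗ[ℝ] ℝ := ∑ j, bbL α t j

lemma sbL_apply (x : Fin (m + 3) → ℝ) : sbL α t x = ∑ j, bb α t j x := by
  simp [sbL, bbL, LinearMap.sum_apply]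

lemma span_sum_one (hα : ∀ i, α i ≠ 0) (ht : 2 ≤ t) :
    ∀ x ∈ affineSpan ℝ (Set.range (vv α t)), ∑ j, bb α t j x = 1 := by
  set S : AffineSubspace ℝ (Fin (m + 3) → ℝ) :=
    { carrier := {x | ∑ j, bb α t j x = 1}
      smul_vsub_vadd_mem' := by
        intro c p1 p2 p3 h1 h2 h3
        simp only [Set.mem_setOf_eq, ← sbL_apply] at *
        simp only [vsub_eq_sub, vadd_eq_add, map_add, map_smul, map_sub, h1, h2, h3,
          smul_eq_mul]
        ring } with hS
  intro x hx
  have hsub : affineSpan ℝ (Set.range (vv α t)) ≤ S := by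
    refine affineSpan_le.2 ?_
    rintro y ⟨k, rfl⟩
    exact sum_bb_vertex hα ht k
  exact hsub hx

lemma mem_hull (α : Fin (m + 1) → ℝ) (t : ℝ) (w : Fin (m + 3) → ℝ) (hw : ∀ j, 0 ≤ w j) (h1 : ∑ j, w j = 1) :
    ∑ j, w j • vv α t j ∈ convexHull ℝ (Set.range (vv α t)) := by
  have h := Finset.centerMass_mem_convexHull (Finset.univ) (fun j _ => hw j)
    (by rw [h1]; norm_num) (fun j (_ : j ∈ Finset.univ) => Set.mem_range_self (f := vv α t) j)
  rwa [Finset.centerMass_eq_of_sum_1 _ _ h1] at h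

lemma mem_intrinsic (hα : ∀ i, α i ≠ 0) (ht : 2 ≤ t) {p : Fin (m + 3) → ℝ}
    (hp : ∀ j, 0 < bb α t j p) (hp1 : ∑ j, bb α t j p = 1) :
    p ∈ intrinsicInterior ℝ (convexHull ℝ (Set.range (vv α t))) := by
  set G := convexHull ℝ (Set.range (vv α t)) with hG
  have hspan : affineSpan ℝ G = affineSpan ℝ (Set.range (vv α t)) := affineSpan_convexHull _
  have hpG : p ∈ G := by
    have h := mem_hull α t (fun j => bb α t j p) (fun j => (hp j).le) hp1
    rwa [key_identity hα ht p] at h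
  have hpspan : p ∈ affineSpan ℝ G := subset_affineSpan ℝ G hpG
  rw [mem_intrinsicInterior]
  refine ⟨⟨p, hpspan⟩, ?_, rfl⟩
  set U : Set (Fin (m + 3) → ℝ) := ⋂ j, {x | 0 < bb α t j x} with hU
  have hUopen : IsOpen U :=
    isOpen_iInter_of_finite fun j => isOpen_lt continuous_const (bb_continuous j)
  have hsub : ((↑) ⁻¹' U : Set (affineSpan ℝ G)) ⊆ (↑) ⁻¹' G := by
    rintro ⟨z, hz⟩ hzU
    simp only [Set.mem_preimage] at hzU ⊢
    have hz' : z ∈ affineSpan ℝ (Set.range (vv α t)) := hspan ▸ hz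
    have hz1 : ∑ j, bb α t j z = 1 := span_sum_one hα ht z hz'
    have hzpos : ∀ j, 0 < bb α t j z := fun j => by
      have := Set.mem_iInter.1 hzU j; exact this
    have h := mem_hull α t (fun j => bb α t j z) (fun j => (hzpos j).le) hz1
    rwa [key_identity hα ht z] at h
  refine interior_maximal hsub (hUopen.preimage continuous_subtype_val) ?_
  exact Set.mem_preimage.2 (Set.mem_iInter.2 fun j => hp j)

lemma finrank_G (hα : ∀ i, α i ≠ 0) (ht : 2 ≤ t) :
    Module.finrank ℝ (vectorSpan ℝ (convexHull ℝ (Set.range (vv α t)))) = m + 2 := by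
  have h1 : vectorSpan ℝ (convexHull ℝ (Set.range (vv α t)))
      = vectorSpan ℝ (Set.range (vv α t)) := by
    rw [← direction_affineSpan, ← direction_affineSpan, affineSpan_convexHull]
  rw [h1, (vv_affInd hα ht).finrank_vectorSpan (Fintype.card_fin _)]

end St16





/-- for `d ≥ 2` (here `d = m + 2`), `a ∈ A_d` with `t = a_d` odd, the
all-ones vector of `ℝ^{d+1}` lies in the relative interior of the `d`-dimensional simplex
`G = conv {a₁e₁, …, a_{d-1}e_{d-1}, ((3t-1)/2) e_d + e_{d+1}, 3t e_{d+1}}`, being the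
explicit convex combination of its vertices with positive coefficients
`1/a₁, …, 1/a_{d-1}, λ = 2/(3t-1), μ = (t-1)/(t(3t-1))` summing to `1`. -/
theorem statement16 {m : ℕ} (a : Fin (m + 2) → ℕ) (ha : a ∈ EgyptSet (m + 2))
    (hodd : Odd (a (Fin.last (m + 1))))
    (t : ℝ) (ht : t = (a (Fin.last (m + 1)) : ℝ))
    (lam mu : ℝ) (hlam : lam = 2 / (3 * t - 1)) (hmu : mu = (t - 1) / (t * (3 * t - 1)))
    (G : Set (Fin (m + 3) → ℝ))
    (hG : G = convexHull ℝ
      ((Set.range fun i : Fin (m + 1) =>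
          ((a i.castSucc : ℝ)) • (Pi.single i.castSucc.castSucc 1 : Fin (m + 3) → ℝ)) ∪
        {((3 * t - 1) / 2) • (Pi.single (⟨m + 1, by omega⟩ : Fin (m + 3)) 1 : Fin (m + 3) → ℝ) +
            (Pi.single (Fin.last (m + 2)) 1 : Fin (m + 3) → ℝ),
          (3 * t) • (Pi.single (Fin.last (m + 2)) 1 : Fin (m + 3) → ℝ)})) :
    Module.finrank ℝ (vectorSpan ℝ G) = m + 2 ∧
    (fun _ => (1 : ℝ)) ∈ intrinsicInterior ℝ G ∧
    0 < lam ∧ 0 < mu ∧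
    (fun _ => (1 : ℝ)) =
      (∑ i : Fin (m + 1), ((a i.castSucc : ℝ))⁻¹ •
          (((a i.castSucc : ℝ)) • (Pi.single i.castSucc.castSucc 1 : Fin (m + 3) → ℝ))) +
        lam • (((3 * t - 1) / 2) •
            (Pi.single (⟨m + 1, by omega⟩ : Fin (m + 3)) 1 : Fin (m + 3) → ℝ) +
          (Pi.single (Fin.last (m + 2)) 1 : Fin (m + 3) → ℝ)) +
        mu • ((3 * t) • (Pi.single (Fin.last (m + 2)) 1 : Fin (m + 3) → ℝ)) ∧
    (∑ i : Fin (m + 1), ((a i.castSucc : ℝ))⁻¹) + lam + mu = 1 := by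
  obtain ⟨hpos, hmono, hsumEq⟩ := ha
  set α : Fin (m + 1) → ℝ := fun i => (a i.castSucc : ℝ) with hαdef
  set p : Fin (m + 3) → ℝ := fun _ => (1 : ℝ) with hpdef
  have hα : ∀ i, α i ≠ 0 := fun i => by
    have := hpos i.castSucc
    simp only [hαdef, ne_eq, Nat.cast_eq_zero]
    omega
  have hta : 2 ≤ a (Fin.last (m + 1)) := by
    rcases Nat.lt_or_ge (a (Fin.last (m + 1))) 2 with h | h
    · have hall : ∀ i, a i = 1 := fun i => by
        have h2 := hmono (Fin.le_last i); have := hpos i; omega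
      rw [Finset.sum_congr rfl (fun i _ => by rw [hall i])] at hsumEq
      simp at hsumEq
      have hm : (0 : ℝ) ≤ (m : ℝ) := Nat.cast_nonneg m
      linarith
    · exact h
  have ht2 : (2 : ℝ) ≤ t := by rw [ht]; exact_mod_cast hta
  obtain ⟨ht0, ht1, ht0', ht1'⟩ := St16.ht_facts ht2
  have hsplit : (∑ i : Fin (m + 1), ((a i.castSucc : ℝ))⁻¹) + t⁻¹ = 1 := by
    rw [ht]
    rw [Fin.sum_univ_castSucc (f := fun i : Fin (m + 2) => ((a i : ℝ))⁻¹)] at hsumEq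
    exact hsumEq
  have hlam0 : 0 < lam := by rw [hlam]; positivity
  have hmu0 : 0 < mu := by rw [hmu]; apply div_pos <;> nlinarith
  have hlm : lam + mu = t⁻¹ := by rw [hlam, hmu]; field_simp; ring
  have hsum1 : (∑ i : Fin (m + 1), ((a i.castSucc : ℝ))⁻¹) + lam + mu = 1 := by
    rw [add_assoc, hlm]; exact hsplit
  have hGv : G = convexHull ℝ (Set.range (St16.vv α t)) := by
    rw [hG, St16.vv_range]
    rfl
  have hb0p : ∀ i : Fin (m + 1), St16.bb α t i.castSucc.castSucc p = (α i)⁻¹ := by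
    intro i
    rw [St16.bb_castSucc_castSucc]
    simp [hpdef]
  have hbwp : St16.bb α t (Fin.last (m + 1)).castSucc p = lam := by
    rw [St16.bb_mid]
    simp only [St16.bw, hpdef, hlam]
    ring
  have hbup : St16.bb α t (Fin.last (m + 2)) p = mu := by
    rw [St16.bb_last]
    simp only [St16.bu, hpdef, hmu]
    field_simp
    ring
  have hpsum : ∑ j, St16.bb α t j p = 1 := by
    rw [St16.sum_expand (fun j => St16.bb α t j p), hbwp, hbup,
      Finset.sum_congr rfl (fun i _ => hb0p i)]
    exact hsum1
  have hppos : ∀ j, 0 < St16.bb α t j p := by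
    intro j
    induction j using Fin.lastCases with
    | last => rw [hbup]; exact hmu0
    | cast j' =>
      induction j' using Fin.lastCases with
      | last => rw [hbwp]; exact hlam0
      | cast i =>
        rw [hb0p i]
        have := hpos i.castSucc
        have : (0 : ℝ) < α i := by
          simp only [hαdef]; exact_mod_cast this
        positivity
  refine ⟨?_, ?_, hlam0, hmu0, ?_, hsum1⟩
  · rw [hGv]; exact St16.finrank_G hα ht2
  · rw [hGv]; exact St16.mem_intrinsic hα ht2 hppos hpsum
  · have hkey := (St16.key_identity hα ht2 p).symm
    rw [St16.sum_expand (fun j => St16.bb α t j p • St16.vv α t j)] at hkey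
    rw [St16.vv_mid, St16.vv_last, hbwp, hbup,
      Finset.sum_congr rfl (fun i (_ : i ∈ Finset.univ) => by
        rw [hb0p i, St16.vv_castSucc_castSucc])] at hkey
    exact hkey
end
end
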